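/- Let A be a unital C*-algebra with a normalized trace τ, let n ≥ 1, and let p₁, …, pₙ ∈ A be projections with p_i·p_j = 0 for i ≠ j, p₁ + ⋯ + pₙ = 1, and τ(p_j) ≤ 1/2 for every j. Then there exists a unitary u ∈ A with τ(u) = 0. -/

import Mathlib

open scoped ComplexOrder

lemma triangle_phases (a b c : ℝ) (ha : 0 ≤ a)
    (ha2 : a ≤ b + c) (hb2 : b ≤ a + c) (hc2 : c ≤ a + b) :
    ∃ x y z : ℂ, ‖x‖ = 1 ∧ ‖y‖ = 1 ∧ ‖z‖ = 1 ∧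
      (a : ℂ) * x + (b : ℂ) * y + (c : ℂ) * z = 0 := by
  set f : ℝ → ℝ := fun θ => ‖(b : ℂ) + (c : ℂ) * Complex.exp (θ * Complex.I)‖ with hf
  have hcont : Continuous f := by
    apply Continuous.norm
    continuity
  have hπ : (0:ℝ) ≤ Real.pi := Real.pi_pos.le
  have hmem : a ∈ Set.Icc (f Real.pi) (f 0) := by
    constructor
    · have : f Real.pi = |b - c| := by
        simp [hf, Complex.exp_pi_mul_I]
        rw [← Real.norm_eq_abs, ← Complex.norm_real]; congr 1; push_cast; ring
      rw [this, abs_sub_le_iff]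
      constructor <;> linarith
    · have : f 0 = |b + c| := by
        simp [hf]
        rw [← Real.norm_eq_abs, ← Complex.norm_real]; congr 1; push_cast; ring
      rw [this]
      calc a ≤ b + c := ha2
        _ ≤ |b + c| := le_abs_self _
  obtain ⟨θ, -, hθ⟩ := intermediate_value_Icc' hπ hcont.continuousOn hmem
  set w : ℂ := (b : ℂ) + (c : ℂ) * Complex.exp (θ * Complex.I) with hw
  have hwn : ‖w‖ = a := hθ
  have hz : ‖Complex.exp (θ * Complex.I)‖ = 1 := by
    exact Complex.norm_exp_ofReal_mul_I θ
  by_cases h0 : a = 0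
  · refine ⟨1, 1, Complex.exp (θ * Complex.I), by simp, by simp, hz, ?_⟩
    have : w = 0 := by rwa [← norm_eq_zero, hwn]
    rw [h0]
    simpa [hw] using this
  · refine ⟨-w / a, 1, Complex.exp (θ * Complex.I), ?_, by simp, hz, ?_⟩
    · rw [norm_div, norm_neg, hwn]
      simp [Real.norm_eq_abs, abs_of_nonneg ha, h0]
    · have ha' : (a : ℂ) ≠ 0 := by exact_mod_cast h0
      field_simp
      rw [hw]; ring

open Finset in
lemma exists_unit_phases (n : ℕ) (r : ℕ → ℝ) (hr0 : ∀ k, 0 ≤ r k)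
    (hr2 : ∀ k, r k ≤ 1/2) (hsum : ∑ k ∈ Finset.range n, r k = 1) :
    ∃ c : ℕ → ℂ, (∀ k, ‖c k‖ = 1) ∧ ∑ k ∈ Finset.range n, c k * (r k : ℂ) = 0 := by
  set S : ℕ → ℝ := fun m => ∑ k ∈ range m, r k with hS
  have hSmono : Monotone S := fun i j h =>
    sum_le_sum_of_subset_of_nonneg (range_subset_range.2 h) (fun k _ _ => hr0 k)
  have hSn : S n = 1 := hsum
  have hsucc : ∀ k, S (k+1) = S k + r k := fun k => sum_range_succ r k
  set Af : Finset ℕ := (range n).filter (fun k => S (k+1) ≤ 1/2) with hAf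
  set Bf : Finset ℕ := (range n).filter (fun k => ¬ S (k+1) ≤ 1/2 ∧ S k < 1/2) with hBf
  set Cf : Finset ℕ := (range n).filter (fun k => ¬ S (k+1) ≤ 1/2 ∧ ¬ S k < 1/2) with hCf
  -- generic splitting of sums over range n
  have hsplit : ∀ g : ℕ → ℂ, ∑ k ∈ range n, g k =
      ∑ k ∈ Af, g k + ∑ k ∈ Bf, g k + ∑ k ∈ Cf, g k := by
    intro g
    rw [hAf, hBf, hCf, ← sum_filter_add_sum_filter_not (range n) (fun k => S (k+1) ≤ 1/2) g]
    rw [← sum_filter_add_sum_filter_not ((range n).filter (fun k => ¬ S (k+1) ≤ 1/2))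
      (fun k => S k < 1/2) g, filter_filter, filter_filter]
    ring
  have hsplitR : ∀ g : ℕ → ℝ, ∑ k ∈ range n, g k =
      ∑ k ∈ Af, g k + ∑ k ∈ Bf, g k + ∑ k ∈ Cf, g k := by
    intro g
    rw [hAf, hBf, hCf, ← sum_filter_add_sum_filter_not (range n) (fun k => S (k+1) ≤ 1/2) g]
    rw [← sum_filter_add_sum_filter_not ((range n).filter (fun k => ¬ S (k+1) ≤ 1/2))
      (fun k => S k < 1/2) g, filter_filter, filter_filter]
    ring
  set a : ℝ := ∑ k ∈ Af, r k with ha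
  set b : ℝ := ∑ k ∈ Bf, r k with hb
  set c : ℝ := ∑ k ∈ Cf, r k with hc
  have habc : a + b + c = 1 := by rw [ha, hb, hc, ← hsplitR r]; exact hsum
  have ha0 : 0 ≤ a := sum_nonneg fun k _ => hr0 k
  have hb0 : 0 ≤ b := sum_nonneg fun k _ => hr0 k
  have hc0 : 0 ≤ c := sum_nonneg fun k _ => hr0 k
  -- a ≤ 1/2
  have ha2 : a ≤ 1/2 := by
    rcases Af.eq_empty_or_nonempty with h | h
    · rw [ha, h]; simp
    · set m := Af.max' h with hm
      have hmA : m ∈ Af := Af.max'_mem h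
      have hmle : S (m+1) ≤ 1/2 := (mem_filter.1 hmA).2
      refine le_trans ?_ hmle
      rw [ha, hS]
      exact sum_le_sum_of_subset_of_nonneg
        (fun k hk => mem_range.2 (Nat.lt_succ_of_le (Af.le_max' k hk))) (fun k _ _ => hr0 k)
  -- b ≤ 1/2
  have hBsing : ∀ j ∈ Bf, Bf ⊆ {j} := by
    intro j hj k hk
    simp only [mem_singleton]
    by_contra hne
    obtain ⟨hjr, hjP⟩ := mem_filter.1 hj
    obtain ⟨hkr, hkP⟩ := mem_filter.1 hk
    rcases lt_or_gt_of_ne hne with hlt | hlt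
    · exact absurd (hSmono (Nat.succ_le_of_lt hlt)) (by push_neg at hkP ⊢; nlinarith [hkP.1, hjP.2])
    · exact absurd (hSmono (Nat.succ_le_of_lt hlt)) (by push_neg at hjP ⊢; nlinarith [hjP.1, hkP.2])
  have hb2 : b ≤ 1/2 := by
    rcases Bf.eq_empty_or_nonempty with h | h
    · rw [hb, h]; simp
    · obtain ⟨j, hj⟩ := h
      calc b ≤ ∑ k ∈ {j}, r k :=
          sum_le_sum_of_subset_of_nonneg (hBsing j hj) (fun k _ _ => hr0 k)
        _ = r j := sum_singleton _ _
        _ ≤ 1/2 := hr2 j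
  -- a + b ≥ 1/2 hence c ≤ 1/2
  have hn1 : 1 ≤ n := by
    by_contra h
    push_neg at h
    interval_cases n
    simp at hsum
  have hinit : ∀ j1, j1 < n → S j1 ≤ a → (∀ k < j1, S (k+1) ≤ 1/2) → S j1 ≤ a := fun _ _ h _ => h
  have hprefix : ∀ j1, j1 < n → (∀ k < j1, S (k+1) ≤ 1/2) → S j1 ≤ a := by
    intro j1 hj1 hk
    rw [ha, hS]
    refine sum_le_sum_of_subset_of_nonneg ?_ (fun k _ _ => hr0 k)
    intro k hkr
    rw [mem_range] at hkr
    exact mem_filter.2 ⟨mem_range.2 (hkr.trans hj1), hk k hkr⟩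
  have hab : 1/2 ≤ a + b := by
    rcases Bf.eq_empty_or_nonempty with hB | hB
    · -- B empty: find minimal j1 with 1/2 < S (j1+1)
      set Pf : Finset ℕ := (range n).filter (fun k => ¬ S (k+1) ≤ 1/2) with hPf
      have hPne : Pf.Nonempty := by
        refine ⟨n - 1, mem_filter.2 ⟨mem_range.2 (Nat.sub_lt hn1 one_pos), ?_⟩⟩
        rw [Nat.sub_add_cancel hn1, hSn]
        norm_num
      set j1 := Pf.min' hPne with hj1
      have hj1P : j1 ∈ Pf := Pf.min'_mem hPne
      obtain ⟨hj1r, hj1gt⟩ := mem_filter.1 hj1P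
      have hj1nB : j1 ∉ Bf := by rw [hB]; exact notMem_empty _
      have hSj1 : 1/2 ≤ S j1 := by
        by_contra hlt
        push_neg at hlt
        exact hj1nB (mem_filter.2 ⟨hj1r, hj1gt, hlt⟩)
      have : S j1 ≤ a := by
        refine hprefix j1 (mem_range.1 hj1r) ?_
        intro k hk
        by_contra hkgt
        exact absurd (Pf.min'_le k (mem_filter.2
          ⟨mem_range.2 (hk.trans (mem_range.1 hj1r)), hkgt⟩)) (not_le.2 hk)
      linarith
    · obtain ⟨j0, hj0⟩ := hB
      obtain ⟨hj0r, hj0gt, hj0lt⟩ := mem_filter.1 hj0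
      have h1 : S j0 ≤ a := by
        refine hprefix j0 (mem_range.1 hj0r) ?_
        intro k hk
        calc S (k+1) ≤ S j0 := hSmono (Nat.succ_le_of_lt hk)
          _ ≤ 1/2 := hj0lt.le
      have h2 : r j0 ≤ b := by
        rw [hb]
        refine single_le_sum (fun k _ => hr0 k) hj0
      have h3 : 1/2 < S j0 + r j0 := by rw [← hsucc]; push_neg at hj0gt; linarith
      linarith
  have hc2 : c ≤ 1/2 := by linarith
  -- get the triangle phases
  obtain ⟨x, y, z, hx, hy, hz, hxyz⟩ :=
    triangle_phases a b c ha0 (by linarith) (by linarith) (by linarith)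
  refine ⟨fun k => if S (k+1) ≤ 1/2 then x else if S k < 1/2 then y else z, ?_, ?_⟩
  · intro k
    dsimp only
    split_ifs <;> assumption
  · rw [hsplit]
    have hA : ∑ k ∈ Af, (if S (k+1) ≤ 1/2 then x else if S k < 1/2 then y else z) * (r k : ℂ)
        = x * (a : ℂ) := by
      rw [ha, Complex.ofReal_sum, mul_sum]
      refine sum_congr rfl fun k hk => ?_
      rw [if_pos (mem_filter.1 hk).2]
    have hB' : ∑ k ∈ Bf, (if S (k+1) ≤ 1/2 then x else if S k < 1/2 then y else z) * (r k : ℂ)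
        = y * (b : ℂ) := by
      rw [hb, Complex.ofReal_sum, mul_sum]
      refine sum_congr rfl fun k hk => ?_
      obtain ⟨-, h1, h2⟩ := mem_filter.1 hk
      rw [if_neg h1, if_pos h2]
    have hC : ∑ k ∈ Cf, (if S (k+1) ≤ 1/2 then x else if S k < 1/2 then y else z) * (r k : ℂ)
        = z * (c : ℂ) := by
      rw [hc, Complex.ofReal_sum, mul_sum]
      refine sum_congr rfl fun k hk => ?_
      obtain ⟨-, h1, h2⟩ := mem_filter.1 hk
      rw [if_neg h1, if_neg h2]
    rw [hA, hB', hC, ← hxyz]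
    ring

/-- If a unital C*-algebra with a normalized trace contains mutually orthogonal
projections summing to `1`, each of trace at most `1/2`, then it contains a unitary of
trace zero. -/
theorem exists_trace_zero_unitary_of_small_projections
    (A : Type*) [NormedRing A] [StarRing A] [CStarRing A] [CompleteSpace A]
    [NormedAlgebra ℂ A] [StarModule ℂ A]
    (τ : A →ₗ[ℂ] ℂ) (hτ1 : τ 1 = 1)
    (hpos : ∀ a : A, 0 ≤ τ (star a * a))
    (htrace : ∀ a b : A, τ (a * b) = τ (b * a))
    (n : ℕ) (hn : 1 ≤ n) (p : Fin n → A)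
    (hsa : ∀ j, star (p j) = p j)
    (hidem : ∀ j, p j * p j = p j)
    (horth : ∀ i j, i ≠ j → p i * p j = 0)
    (hsum : ∑ j, p j = 1)
    (htr : ∀ j, τ (p j) ≤ (1 / 2 : ℂ)) :
    ∃ u : A, u ∈ unitary A ∧ τ u = 0 := by
  -- the traces of the projections are real, nonnegative, at most 1/2, and sum to 1
  have hppos : ∀ j, 0 ≤ τ (p j) := by
    intro j
    have := hpos (p j)
    rwa [hsa j, hidem j] at this
  set r : Fin n → ℝ := fun j => (τ (p j)).re with hr
  have hτp : ∀ j, τ (p j) = (r j : ℂ) := by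
    intro j
    have h := hppos j
    rw [Complex.le_def] at h
    exact Complex.ext rfl (by simpa using h.2.symm)
  have hr0 : ∀ j, 0 ≤ r j := by
    intro j
    have h := hppos j
    rw [Complex.le_def] at h
    simpa using h.1
  have hr2 : ∀ j, r j ≤ 1/2 := by
    intro j
    have h := htr j
    rw [Complex.le_def] at h
    simpa using h.1
  have hsumr : ∑ j, r j = 1 := by
    have : τ (∑ j, p j) = 1 := by rw [hsum, hτ1]
    rw [map_sum] at this
    have := congrArg Complex.re this
    simpa [Complex.re_sum, hr] using this
  -- transfer to a function on ℕ
  set r' : ℕ → ℝ := fun k => if h : k < n then r ⟨k, h⟩ else 0 with hr'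
  have hfin : ∀ (j : Fin n), r' j.val = r j := by
    intro j; simp [hr', j.isLt]
  have hsum' : ∑ k ∈ Finset.range n, r' k = 1 := by
    rw [← Fin.sum_univ_eq_sum_range]
    rw [← hsumr]
    exact Finset.sum_congr rfl fun j _ => hfin j
  obtain ⟨c, hc1, hc0⟩ := exists_unit_phases n r'
    (fun k => by rw [hr']; dsimp only; split_ifs with h; exacts [hr0 _, le_refl 0])
    (fun k => by rw [hr']; dsimp only; split_ifs with h; exacts [hr2 _, by norm_num]) hsum'
  -- the unitary
  set u : A := ∑ j, (c j.val) • p j with hu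
  have hcc : ∀ j : Fin n, (starRingEnd ℂ) (c j.val) * c j.val = 1 := by
    intro j
    have : Complex.normSq (c j.val) = 1 := by
      rw [Complex.normSq_eq_norm_sq, hc1]; norm_num
    rw [mul_comm, Complex.mul_conj, this, Complex.ofReal_one]
  have hmul : ∀ d e : Fin n → ℂ, (∀ i, d i * e i = 1) →
      (∑ j, (d j) • p j) * (∑ j, (e j) • p j) = 1 := by
    intro d e hde
    rw [Finset.sum_mul_sum]
    simp_rw [smul_mul_smul_comm]
    have hin : ∀ i : Fin n, ∑ j, (d i * e j) • (p i * p j) = p i := by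
      intro i
      rw [Finset.sum_eq_single i
        (fun j _ hj => by rw [horth i j (Ne.symm hj), smul_zero])
        (fun h => absurd (Finset.mem_univ i) h)]
      rw [hidem i, hde i, one_smul]
    rw [Finset.sum_congr rfl fun i _ => hin i, hsum]
  have hustar : star u = ∑ j, ((starRingEnd ℂ) (c j.val)) • p j := by
    rw [hu, star_sum]
    exact Finset.sum_congr rfl fun j _ => by rw [star_smul, hsa j, starRingEnd_apply]
  refine ⟨u, ⟨?_, ?_⟩, ?_⟩
  · rw [hustar, hu]; exact hmul _ _ hcc
  · rw [hustar, hu]; exact hmul _ _ (fun i => by rw [mul_comm]; exact hcc i)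
  · rw [hu, map_sum]
    have : ∀ j : Fin n, τ ((c j.val) • p j) = c j.val * (r' j.val : ℂ) := by
      intro j
      rw [map_smul, smul_eq_mul, hτp j, hfin j]
    rw [Finset.sum_congr rfl fun j _ => this j]
    rw [Fin.sum_univ_eq_sum_range (fun k => c k * (r' k : ℂ)) n]
    exact hc0
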